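/- For all odd integers s, t ≥ 3, the toroidal grid T_{s,t} = C_s □ C_t satisfies mbt(T_{s,t}) ≥ 5. -/

import Mathlib

open SimpleGraph

/-- Two chords of a circle, given by positions of their endpoints along the circle,
cross: their endpoint pairs interleave. -/
def chordsCross (a b c d : ℕ) : Prop :=
  (min a b < min c d ∧ min c d < max a b ∧ max a b < max c d) ∨
  (min c d < min a b ∧ min a b < max c d ∧ max c d < max a b)

/-- Two edges cross with respect to a position function `f` on the vertices. -/
def edgesCross {V : Type*} (f : V → ℕ) (e e' : Sym2 V) : Prop :=
  ∃ a b c d, e = s(a, b) ∧ e' = s(c, d) ∧ chordsCross (f a) (f b) (f c) (f d)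

/-- `(f, c)` is a matching book embedding of `G`: the edge coloring `c` is proper and
edges that cross in the cyclic ordering given by `f` receive distinct colors. -/
def IsMBE {V : Type*} [Fintype V] (G : SimpleGraph V)
    (f : V ≃ Fin (Fintype.card V)) {m : ℕ} (c : G.edgeSet → Fin m) : Prop :=
  (∀ e₁ e₂ : G.edgeSet, e₁ ≠ e₂ → (∃ v, v ∈ (e₁ : Sym2 V) ∧ v ∈ (e₂ : Sym2 V)) →
      c e₁ ≠ c e₂) ∧
  (∀ e₁ e₂ : G.edgeSet,
      edgesCross (fun v => (f v : ℕ)) (e₁ : Sym2 V) (e₂ : Sym2 V) → c e₁ ≠ c e₂)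

/-- `G` has an `m`-page matching book embedding. -/
def HasMBE {V : Type*} [Fintype V] (G : SimpleGraph V) (m : ℕ) : Prop :=
  ∃ (f : V ≃ Fin (Fintype.card V)) (c : G.edgeSet → Fin m), IsMBE G f c

/-- The matching book thickness of `G`. -/
noncomputable def mbt {V : Type*} [Fintype V] (G : SimpleGraph V) : ℕ :=
  sInf {m | HasMBE G m}

/-- The toroidal grid `T_{s,t} = C_s □ C_t`. -/
def toroidalGrid (s t : ℕ) : SimpleGraph (Fin s × Fin t) :=
  (cycleGraph s) □ (cycleGraph t)

/-! ### Auxiliary lemmas -/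

lemma even_card_of_invol {α : Type*} [Fintype α] [DecidableEq α] (σ : α → α)
    (hinv : Function.Involutive σ) (hfpf : ∀ a, σ a ≠ a) : Even (Fintype.card α) := by
  have : Fact (Nat.Prime 2) := ⟨Nat.prime_two⟩
  set f : Function.End α := σ with hfdef
  have hf : f ^ 2 ^ 1 = 1 := by
    show f * f * 1 = 1
    rw [mul_one]
    funext a
    exact hinv a
  have key := Equiv.Perm.card_fixedPoints_modEq (p := 2) (n := 1) hf
  have h0 : Fintype.card (Function.fixedPoints f) = 0 := by
    rw [Fintype.card_eq_zero_iff]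
    constructor
    intro ⟨a, ha⟩
    exact hfpf a ha
  rw [h0] at key
  rw [Nat.even_iff]
  simpa [Nat.ModEq] using key

section Core

variable {V : Type*} [Fintype V] [DecidableEq V] {G : SimpleGraph V} {m : ℕ}
  {f : V ≃ Fin (Fintype.card V)} {c : G.edgeSet → Fin m}

lemma color_unique (hmbe : IsMBE G f c) {v w w' : V} (h : G.Adj v w) (h' : G.Adj v w')
    (hc : c ⟨s(v,w), h⟩ = c ⟨s(v,w'), h'⟩) : w = w' := by
  by_contra hne
  refine hmbe.1 ⟨s(v,w), h⟩ ⟨s(v,w'), h'⟩ ?_ ⟨v, by simp, by simp⟩ hc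
  intro he
  rw [Subtype.ext_iff] at he
  rcases Sym2.eq_iff.1 he with ⟨_, hw⟩ | ⟨hv, hw⟩
  · exact hne hw
  · exact G.irrefl (hw ▸ h)

lemma color_exists (hmbe : IsMBE G f c) (hm : m ≤ 4) {v : V} (N : Finset V)
    (hcard : N.card = 4) (hadj : ∀ w ∈ N, G.Adj v w) (k : Fin m) :
    ∃ w, ∃ h : G.Adj v w, c ⟨s(v,w), h⟩ = k := by
  classical
  set φ : V → Fin m := fun w => if h : G.Adj v w then c ⟨s(v,w), h⟩ else k with hφ
  have hinj : Set.InjOn φ N := by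
    intro w hw w' hw' hcc
    have h := hadj w hw
    have h' := hadj w' hw'
    rw [hφ] at hcc
    simp only [dif_pos h, dif_pos h'] at hcc
    exact color_unique hmbe h h' hcc
  have himg : (N.image φ).card = 4 := by
    rw [Finset.card_image_of_injOn hinj, hcard]
  have h4m : 4 ≤ m := by
    have := Finset.card_le_univ (N.image φ)
    rw [himg] at this
    simpa using this
  have heq : N.image φ = Finset.univ := by
    apply Finset.eq_univ_of_card
    rw [himg, Fintype.card_fin]
    omega
  obtain ⟨w, hwN, hwk⟩ := Finset.mem_image.1 (heq ▸ Finset.mem_univ k)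
  have h := hadj w hwN
  refine ⟨w, h, ?_⟩
  rw [hφ] at hwk
  simpa only [dif_pos h] using hwk

lemma parity_lt (hmbe : IsMBE G f c) (hm : m ≤ 4)
    (hreg : ∀ v : V, ∃ N : Finset V, N.card = 4 ∧ ∀ w ∈ N, G.Adj v w)
    {a b : V} (hab : G.Adj a b) (hlt : (f a : ℕ) < (f b : ℕ)) :
    ¬ ((f a : ℕ) % 2 = (f b : ℕ) % 2) := by
  classical
  intro hpar
  set k : Fin m := c ⟨s(a,b), hab⟩ with hk
  -- every vertex strictly between a and b has its k-colored edge going to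
  -- another vertex strictly between a and b
  have key : ∀ u : V, (f a : ℕ) < (f u : ℕ) → (f u : ℕ) < (f b : ℕ) →
      ∃ w, ∃ h : G.Adj u w, c ⟨s(u,w), h⟩ = k ∧
        (f a : ℕ) < (f w : ℕ) ∧ (f w : ℕ) < (f b : ℕ) := by
    intro u hu1 hu2
    obtain ⟨N, hN4, hNadj⟩ := hreg u
    obtain ⟨w, h, hck⟩ := color_exists hmbe hm N hN4 hNadj k
    have hub : u ≠ b := fun hh => by rw [hh] at hu2; omega
    have hua : u ≠ a := fun hh => by rw [hh] at hu1; omega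
    have hedne : (⟨s(a,b), hab⟩ : G.edgeSet) ≠ ⟨s(u,w), h⟩ := by
      intro he
      rw [Subtype.ext_iff] at he
      rcases Sym2.eq_iff.1 he with ⟨ha', hb'⟩ | ⟨ha', hb'⟩
      · exact hua ha'.symm
      · exact hub hb'.symm
    have hwa : w ≠ a := by
      intro hwe
      refine hmbe.1 ⟨s(a,b), hab⟩ ⟨s(u,w), h⟩ hedne ⟨a, by simp, by simp [hwe.symm]⟩ ?_
      rw [hck]
    have hwb : w ≠ b := by
      intro hwe
      refine hmbe.1 ⟨s(a,b), hab⟩ ⟨s(u,w), h⟩ hedne ⟨b, by simp, by simp [hwe.symm]⟩ ?_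
      rw [hck]
    have hfwa : (f w : ℕ) ≠ (f a : ℕ) := fun hh => hwa (f.injective (Fin.val_injective hh))
    have hfwb : (f w : ℕ) ≠ (f b : ℕ) := fun hh => hwb (f.injective (Fin.val_injective hh))
    refine ⟨w, h, hck, ?_⟩
    by_contra hout
    have hcases : (f w : ℕ) < (f a : ℕ) ∨ (f b : ℕ) < (f w : ℕ) := by omega
    have hcross : edgesCross (fun v => (f v : ℕ)) s(a,b) s(u,w) := by
      refine ⟨a, b, u, w, rfl, rfl, ?_⟩
      dsimp only
      unfold chordsCross
      rcases hcases with hc | hc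
      · right; omega
      · left; omega
    exact hmbe.2 ⟨s(a,b), hab⟩ ⟨s(u,w), h⟩ hcross (by rw [hck, hk])
  -- the set of vertices strictly between a and b
  set S := {u : V // (f a : ℕ) < (f u : ℕ) ∧ (f u : ℕ) < (f b : ℕ)} with hS
  have hchoose : ∀ u : S, ∃ w : S, ∃ h : G.Adj u.1 w.1, c ⟨s(u.1, w.1), h⟩ = k := by
    rintro ⟨u, hu1, hu2⟩
    obtain ⟨w, h, hck, hw1, hw2⟩ := key u hu1 hu2
    exact ⟨⟨w, hw1, hw2⟩, h, hck⟩
  choose σ hσadj hσc using hchoose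
  have hinv : Function.Involutive σ := by
    intro u
    have h1 : G.Adj (σ u).1 u.1 := (hσadj u).symm
    have hc1 : c ⟨s((σ u).1, u.1), h1⟩ = k := by
      rw [← hσc u]
      congr 1
      exact Subtype.ext (Sym2.eq_swap)
    have := color_unique hmbe (hσadj (σ u)) h1 (by rw [hσc (σ u), hc1])
    exact Subtype.ext this
  have hfpf : ∀ u : S, σ u ≠ u := by
    intro u hu
    exact G.irrefl (hu ▸ (hσadj u)).symm
  have heven : Even (Fintype.card S) := even_card_of_invol σ hinv hfpf
  have hcardS : Fintype.card S = (f b : ℕ) - (f a : ℕ) - 1 := by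
    have e1 : S ≃ Set.Ioo (f a) (f b) :=
      f.subtypeEquiv (fun u => Iff.rfl)
    rw [Fintype.card_congr e1, ← Set.toFinset_card, Set.toFinset_Ioo, Fin.card_Ioo]
  rw [hcardS, Nat.even_iff] at heven
  omega

lemma parity_adj (hmbe : IsMBE G f c) (hm : m ≤ 4)
    (hreg : ∀ v : V, ∃ N : Finset V, N.card = 4 ∧ ∀ w ∈ N, G.Adj v w)
    {a b : V} (hab : G.Adj a b) :
    ¬ ((f a : ℕ) % 2 = (f b : ℕ) % 2) := by
  have hne : (f a : ℕ) ≠ (f b : ℕ) :=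
    fun hh => hab.ne (f.injective (Fin.val_injective hh))
  rcases lt_or_gt_of_ne hne with hlt | hlt
  · exact parity_lt hmbe hm hreg hab hlt
  · intro hp
    exact parity_lt hmbe hm hreg hab.symm hlt hp.symm

end Core

section Grid

lemma fin_add_one_ne {k' : ℕ} (a : Fin (k'+3)) : a + 1 ≠ a := by
  intro h
  rw [add_eq_left] at h
  exact one_ne_zero h

lemma fin_sub_one_ne {k' : ℕ} (a : Fin (k'+3)) : a - 1 ≠ a := by
  intro h
  rw [sub_eq_self] at h
  exact one_ne_zero h

lemma fin_add_one_ne_sub_one {k' : ℕ} (a : Fin (k'+3)) : a + 1 ≠ a - 1 := by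
  intro h
  rw [eq_sub_iff_add_eq, add_assoc, add_eq_left] at h
  have h2 : ((1 + 1:Fin (k'+3)) : ℕ) = 2 := by simp [Fin.val_add]
  rw [h] at h2
  simp at h2

lemma cyc_adj_succ {k' : ℕ} (a : Fin (k'+3)) : (cycleGraph (k'+3)).Adj a (a+1) := by
  rw [SimpleGraph.cycleGraph_adj']
  right
  simp [add_sub_cancel_left]

lemma cyc_adj_pred {k' : ℕ} (a : Fin (k'+3)) : (cycleGraph (k'+3)).Adj a (a-1) := by
  rw [SimpleGraph.cycleGraph_adj']
  left
  simp [sub_sub_cancel]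

lemma grid_reg (s' t' : ℕ) (v : Fin (s'+3) × Fin (t'+3)) :
    ∃ N : Finset (Fin (s'+3) × Fin (t'+3)), N.card = 4 ∧
      ∀ w ∈ N, (toroidalGrid (s'+3) (t'+3)).Adj v w := by
  obtain ⟨i, j⟩ := v
  have ne1 := fin_add_one_ne i
  have ne2 := fin_sub_one_ne i
  have ne3 := fin_add_one_ne_sub_one i
  have ne4 := fin_add_one_ne j
  have ne5 := fin_sub_one_ne j
  have ne6 := fin_add_one_ne_sub_one j
  refine ⟨{(i+1, j), (i-1, j), (i, j+1), (i, j-1)}, ?_, ?_⟩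
  · rw [Finset.card_insert_of_notMem (by simp [Prod.ext_iff, ne1, ne3]),
      Finset.card_insert_of_notMem (by simp [Prod.ext_iff, ne2]),
      Finset.card_insert_of_notMem (by simp [Prod.ext_iff, ne6]),
      Finset.card_singleton]
  · intro w hw
    simp only [Finset.mem_insert, Finset.mem_singleton] at hw
    rcases hw with rfl | rfl | rfl | rfl
    · exact SimpleGraph.boxProd_adj_left.mpr (cyc_adj_succ i)
    · exact SimpleGraph.boxProd_adj_left.mpr (cyc_adj_pred i)
    · exact SimpleGraph.boxProd_adj_right.mpr (cyc_adj_succ j)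
    · exact SimpleGraph.boxProd_adj_right.mpr (cyc_adj_pred j)

end Grid

theorem stmt6 (s t : ℕ) (hs : 3 ≤ s) (ht : 3 ≤ t) (hso : Odd s) (hto : Odd t) :
    5 ≤ mbt (toroidalGrid s t) := by
  obtain ⟨s', rfl⟩ : ∃ s', s = s' + 3 := ⟨s - 3, by omega⟩
  obtain ⟨t', rfl⟩ : ∃ t', t = t' + 3 := ⟨t - 3, by omega⟩
  classical
  apply le_csInf
  · -- the set of admissible page numbers is nonempty
    have hft : Fintype (toroidalGrid (s'+3) (t'+3)).edgeSet := Fintype.ofFinite _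
    refine ⟨Fintype.card (toroidalGrid (s'+3) (t'+3)).edgeSet,
      Fintype.equivFin _, Fintype.equivFin _, ?_, ?_⟩
    · intro e1 e2 hne _ hc
      exact hne ((Fintype.equivFin _).injective hc)
    · intro e1 e2 hcross hc
      have heq : e1 = e2 := (Fintype.equivFin _).injective hc
      subst heq
      obtain ⟨a, b, cc, d, h1, h2, hcc⟩ := hcross
      rw [h1] at h2
      dsimp only at hcc
      rcases Sym2.eq_iff.1 h2 with ⟨rfl, rfl⟩ | ⟨rfl, rfl⟩ <;>
        · unfold chordsCross at hcc
          omega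
  · rintro m ⟨f, c, hmbe⟩
    by_contra hlt
    push_neg at hlt
    have hm : m ≤ 4 := by omega
    have hpar : ∀ {a b}, (toroidalGrid (s'+3) (t'+3)).Adj a b →
        ¬ ((f a : ℕ) % 2 = (f b : ℕ) % 2) :=
      fun hab => parity_adj hmbe hm (grid_reg s' t') hab
    have step : ∀ x : Fin (s'+3), ¬ ((f (x,0) : ℕ) % 2 = (f (x+1,0) : ℕ) % 2) :=
      fun x => hpar (SimpleGraph.boxProd_adj_left.mpr (cyc_adj_succ x))
    open Fin.NatCast Fin.CommRing in
    have ind : ∀ k : ℕ,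
        (f (((k : Fin (s'+3))), 0) : ℕ) % 2 = ((f ((0 : Fin (s'+3)), 0) : ℕ) + k) % 2 := by
      intro k
      induction k with
      | zero => simp
      | succ n ih =>
        have hcast : ((n+1 : ℕ) : Fin (s'+3)) = (n : Fin (s'+3)) + 1 := by push_cast; ring
        rw [hcast]
        have hstep := step (n : Fin (s'+3))
        omega
    have hfin := ind (s'+3)
    rw [Fin.natCast_self] at hfin
    have hodd := Nat.odd_iff.mp hso
    omega
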